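/- The pre-order (depth-first, children visited in order of increasing index) traversal of the tree built by the nearest-preceding-larger-size rule, starting at the root and omitting the root, visits the blocks exactly in reading order x_1, x_2, …, x_n. -/

import Mathlib

/-- Parent of block `i`: the nearest (largest-index) preceding block with strictly
larger font size, or `none` (the root) if no such block exists. -/
noncomputable def parentIdx {n : ℕ} (s : Fin n → ℝ) (i : Fin n) : Option (Fin n) :=
  if h : (Finset.univ.filter fun j => j < i ∧ s i < s j).Nonempty
  then some ((Finset.univ.filter fun j => j < i ∧ s i < s j).max' h)
  else none

/-- One step of following parent links, on `Option` (where `none` is the root). -/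
def pstep {α : Type*} (p : α → Option α) : Option α → Option α := fun o => o.bind p

/-- `isAnc s a b`: `a` is a proper (non-root) ancestor of `b` in the tree built by the
nearest-preceding-larger-size rule. -/
def isAnc {n : ℕ} (s : Fin n → ℝ) (a b : Fin n) : Prop :=
  Relation.TransGen (fun u v => parentIdx s v = some u) a b

/-- `ancOrSelf s a b`: `a` equals `b` or is a proper ancestor of `b`. -/
def ancOrSelf {n : ℕ} (s : Fin n → ℝ) (a b : Fin n) : Prop :=
  Relation.ReflTransGen (fun u v => parentIdx s v = some u) a b

/-- `preBefore s u v`: in the pre-order (depth-first) traversal that visits a node before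
its descendants and visits children (and the root's children) in order of increasing index,
`u` is visited strictly before `v`: either `u` is an ancestor of `v`, or `u` and `v`
descend (reflexively) from two distinct siblings `a < b` respectively. -/
def preBefore {n : ℕ} (s : Fin n → ℝ) (u v : Fin n) : Prop :=
  isAnc s u v ∨
    ∃ a b : Fin n, parentIdx s a = parentIdx s b ∧ a < b ∧
      ancOrSelf s a u ∧ ancOrSelf s b v

variable {n : ℕ} {s : Fin n → ℝ}

lemma parent_mem {i p : Fin n} (h : parentIdx s i = some p) : p < i ∧ s i < s p := by
  rw [parentIdx] at h
  split at h
  · rename_i hne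
    simp only [Option.some.injEq] at h
    have := Finset.max'_mem _ hne
    rw [h] at this
    simpa using this
  · simp at h

lemma parent_ub {i p j : Fin n} (h : parentIdx s i = some p) (hj : j < i) (hs : s i < s j) :
    j ≤ p := by
  rw [parentIdx] at h
  split at h
  · rename_i hne
    simp only [Option.some.injEq] at h
    rw [← h]
    exact Finset.le_max' _ j (by simp [hj, hs])
  · simp at h

lemma exists_lastArgmax (s : Fin n → ℝ) (T : Finset (Fin n)) (hT : T.Nonempty) :
    ∃ m ∈ T, (∀ t ∈ T, s t ≤ s m) ∧ ∀ t ∈ T, m < t → s t < s m := by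
  obtain ⟨m0, hm0, hmax⟩ := T.exists_max_image s hT
  set A := T.filter (fun t => ∀ u ∈ T, s u ≤ s t) with hA
  have hAne : A.Nonempty := ⟨m0, by simp [hA, hm0]; exact hmax⟩
  set m := A.max' hAne with hm
  have hmA : m ∈ A := A.max'_mem hAne
  rw [hA, Finset.mem_filter] at hmA
  refine ⟨m, hmA.1, hmA.2, ?_⟩
  intro t ht hlt
  by_contra hle
  push_neg at hle
  have heq : ∀ u ∈ T, s u ≤ s t := fun u hu => (hmA.2 u hu).trans hle
  have : t ∈ A := Finset.mem_filter.2 ⟨ht, heq⟩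
  exact absurd (Finset.le_max' A t this) (not_le.2 hlt)

lemma ancOrSelf_def {a b : Fin n} :
    (Relation.ReflTransGen (fun u v => parentIdx s v = some u) a b) →
    a ≤ b ∧ ∀ j, a < j → j ≤ b → s j < s a := by
  intro h
  induction h using Relation.ReflTransGen.head_induction_on with
  | refl => exact ⟨le_refl _, fun j hj hj' => absurd (lt_of_lt_of_le hj hj') (lt_irrefl _)⟩
  | head hedge _ ih =>
    rename_i a c _
    obtain ⟨hca, hsa⟩ := parent_mem hedge
    refine ⟨le_of_lt (lt_of_lt_of_le hca ih.1), ?_⟩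
    intro j hj hj'
    rcases lt_trichotomy j c with hjc | rfl | hcj
    · by_contra hle
      push_neg at hle
      have hsj : s c < s j := lt_of_lt_of_le hsa hle
      exact absurd (parent_ub hedge hjc hsj) (not_le.2 hj)
    · exact hsa
    · exact (ih.2 j hcj hj').trans hsa

lemma cond_ancOrSelf (a b : Fin n) (hab : a ≤ b)
    (h : ∀ j, a < j → j ≤ b → s j < s a) :
    Relation.ReflTransGen (fun u v => parentIdx s v = some u) a b := by
  rcases eq_or_lt_of_le hab with rfl | hlt
  · exact .refl
  · have hamem : a ∈ Finset.univ.filter fun j => j < b ∧ s b < s j := by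
      simp [hlt, h b hlt le_rfl]
    have hne : (Finset.univ.filter fun j => j < b ∧ s b < s j).Nonempty := ⟨a, hamem⟩
    set p := (Finset.univ.filter fun j => j < b ∧ s b < s j).max' hne with hpdef
    have hp : parentIdx s b = some p := by rw [parentIdx, dif_pos hne]
    have hpa : a ≤ p := Finset.le_max' _ a hamem
    have hpb : p < b := (parent_mem hp).1
    have ih := cond_ancOrSelf a p hpa
      (fun j hj hj' => h j hj (le_of_lt (lt_of_le_of_lt hj' hpb)))
    exact ih.tail hp
termination_by b.val
decreasing_by exact hpb

section Main
variable (s)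

def isAnc' (a b : Fin n) : Prop := Relation.TransGen (fun u v => parentIdx s v = some u) a b

lemma ancOrSelf_le {a b : Fin n} (h : Relation.ReflTransGen (fun u v => parentIdx s v = some u) a b) :
    a ≤ b := (ancOrSelf_def h).1

theorem main (u v : Fin n) :
    (isAnc' s u v ∨
      ∃ a b : Fin n, parentIdx s a = parentIdx s b ∧ a < b ∧
        Relation.ReflTransGen (fun u' v' => parentIdx s v' = some u') a u ∧
        Relation.ReflTransGen (fun u' v' => parentIdx s v' = some u') b v) ↔ u < v := by
  constructor
  · rintro (h | ⟨a, b, hpab, hab, h1, h2⟩)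
    · induction h with
      | single hedge => exact (parent_mem hedge).1
      | tail _ hedge ih => exact ih.trans (parent_mem hedge).1
    · have hbv : b ≤ v := ancOrSelf_le s h2
      have hub : u < b := by
        by_contra hle
        push_neg at hle  -- b ≤ u
        have hsb : s b < s a := (ancOrSelf_def h1).2 b hab hle
        have hne : (Finset.univ.filter fun j => j < b ∧ s b < s j).Nonempty :=
          ⟨a, by simp [hab, hsb]⟩
        have hp : parentIdx s b = some ((Finset.univ.filter fun j => j < b ∧ s b < s j).max' hne) := by
          rw [parentIdx, dif_pos hne]
        have hap : a ≤ (Finset.univ.filter fun j => j < b ∧ s b < s j).max' hne :=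
          Finset.le_max' _ a (by simp [hab, hsb])
        have hpa : parentIdx s a = some ((Finset.univ.filter fun j => j < b ∧ s b < s j).max' hne) := by
          rw [hpab, hp]
        exact absurd (parent_mem hpa).1 (not_lt.2 hap)
      exact lt_of_lt_of_le hub hbv
  · intro huv
    -- pick b = last argmax of s on Ioc u v
    obtain ⟨b, hbmem, hbmax, hbstrict⟩ := exists_lastArgmax s (Finset.Ioc u v)
      (Finset.nonempty_Ioc.2 huv)
    rw [Finset.mem_Ioc] at hbmem
    have hanc_bv : Relation.ReflTransGen (fun u' v' => parentIdx s v' = some u') b v := by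
      refine cond_ancOrSelf b v hbmem.2 ?_
      intro j hj hj'
      exact hbstrict j (Finset.mem_Ioc.2 ⟨hbmem.1.trans hj, hj'⟩) hj
    -- candidates for parent of b are ≤ u, in fact < u unless s u > s b
    have hcand : ∀ j : Fin n, j < b → s b < s j → j ≤ u := by
      intro j hjb hsj
      by_contra hle
      push_neg at hle
      exact absurd (hbmax j (Finset.mem_Ioc.2 ⟨hle, le_of_lt (lt_of_lt_of_le hjb hbmem.2)⟩))
        (not_le.2 hsj)
    rcases lt_or_ge (s b) (s u) with hsu | hsu
    · -- parentIdx b = some u, so isAnc u v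
      left
      have humem : u ∈ Finset.univ.filter fun j => j < b ∧ s b < s j := by
        simp [hbmem.1, hsu]
      have hne : (Finset.univ.filter fun j => j < b ∧ s b < s j).Nonempty := ⟨u, humem⟩
      have hmax_eq : (Finset.univ.filter fun j => j < b ∧ s b < s j).max' hne = u := by
        refine le_antisymm ?_ (Finset.le_max' _ u humem)
        have := Finset.max'_mem _ hne
        simp only [Finset.mem_filter] at this
        exact hcand _ this.2.1 this.2.2
      have hp : parentIdx s b = some u := by
        rw [parentIdx, dif_pos hne, hmax_eq]
      exact Relation.TransGen.head' hp hanc_bv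
    · right
      by_cases hS : (Finset.univ.filter fun j => j < b ∧ s b < s j).Nonempty
      · -- parentIdx b = some p with p < u
        set p := (Finset.univ.filter fun j => j < b ∧ s b < s j).max' hS with hpdef
        have hpmem := Finset.max'_mem _ hS
        simp only [Finset.mem_filter] at hpmem
        have hpb : parentIdx s b = some p := by rw [parentIdx, dif_pos hS]
        have hpu : p < u := by
          rcases lt_or_eq_of_le (hcand p hpmem.2.1 hpmem.2.2) with h | h
          · exact h
          · exact absurd (h ▸ hpmem.2.2) (not_lt.2 hsu)
        obtain ⟨a, hamem, hamax, hastrict⟩ := exists_lastArgmax s (Finset.Ioc p u)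
          (Finset.nonempty_Ioc.2 hpu)
        rw [Finset.mem_Ioc] at hamem
        have hanc_au : Relation.ReflTransGen (fun u' v' => parentIdx s v' = some u') a u := by
          refine cond_ancOrSelf a u hamem.2 ?_
          intro j hj hj'
          exact hastrict j (Finset.mem_Ioc.2 ⟨hamem.1.trans hj, hj'⟩) hj
        have hab : a < b := lt_of_le_of_lt hamem.2 hbmem.1
        have hsab : s a ≤ s b := by
          by_contra hc
          push_neg at hc
          have : a ≤ p := Finset.le_max' _ a (by simp [hab, hc])
          exact absurd this (not_le.2 hamem.1)
        have hpa : parentIdx s a = some p := by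
          have hpmem' : p ∈ Finset.univ.filter fun j => j < a ∧ s a < s j := by
            simpa [hamem.1] using lt_of_le_of_lt hsab hpmem.2.2
          have hne' : (Finset.univ.filter fun j => j < a ∧ s a < s j).Nonempty := ⟨p, hpmem'⟩
          have hmax_eq : (Finset.univ.filter fun j => j < a ∧ s a < s j).max' hne' = p := by
            refine le_antisymm ?_ (Finset.le_max' _ p hpmem')
            have hm := Finset.max'_mem _ hne'
            simp only [Finset.mem_filter] at hm
            by_contra hle
            push_neg at hle
            exact absurd (hamax _ (Finset.mem_Ioc.2 ⟨hle, le_of_lt (lt_of_lt_of_le hm.2.1 hamem.2)⟩))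
              (not_le.2 hm.2.2)
          rw [parentIdx, dif_pos hne', hmax_eq]
        exact ⟨a, b, by rw [hpa, hpb], hab, hanc_au, hanc_bv⟩
      · -- parentIdx b = none
        have hpb : parentIdx s b = none := by rw [parentIdx, dif_neg hS]
        obtain ⟨a, hamem, hamax, hastrict⟩ := exists_lastArgmax s (Finset.Iic u)
          ⟨u, Finset.mem_Iic.2 le_rfl⟩
        rw [Finset.mem_Iic] at hamem
        have hanc_au : Relation.ReflTransGen (fun u' v' => parentIdx s v' = some u') a u := by
          refine cond_ancOrSelf a u hamem ?_
          intro j hj hj'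
          exact hastrict j (Finset.mem_Iic.2 hj') hj
        have hpa : parentIdx s a = none := by
          rw [parentIdx, dif_neg]
          rw [Finset.not_nonempty_iff_eq_empty]
          ext j
          simp only [Finset.mem_filter, Finset.mem_univ, true_and, Finset.notMem_empty,
            iff_false, not_and, not_lt]
          intro hja
          exact hamax j (Finset.mem_Iic.2 (le_of_lt (lt_of_lt_of_le hja hamem)))
        exact ⟨a, b, by rw [hpa, hpb], lt_of_le_of_lt hamem hbmem.1, hanc_au, hanc_bv⟩
end Main


/-- The pre-order traversal of the tree (omitting the root) visits the blocks exactly in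
reading order: the visit order coincides with the index order. -/
theorem stmt4 {n : ℕ} (s : Fin n → ℝ) (u v : Fin n) :
    preBefore s u v ↔ u < v := by
  rw [preBefore]
  exact main s u v
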